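/- Let p ∈ (0,1] and T > 0, and let (S_m)_{m≥1} be any sequence of real numbers with |S_m| ≤ m for all m ≥ 1. Then there exist a constant C > 0 and an integer N such that for all n ≥ N, sup_{t∈[0,T]} |(a_{n+⌊nt⌋}/a_n)·S_{n+⌊nt⌋} − (1+t)^{1−2p}·S_{n+⌊nt⌋}| / √n ≤ C/√n; in particular this supremum tends to 0 as n → ∞. -/

import Mathlib

open Real Filter Set

/-- `a p n = Γ(2p)·Γ(n)/Γ(n+2p−1)`. -/
noncomputable def a (p : ℝ) (n : ℕ) : ℝ :=
  Real.Gamma (2*p) * Real.Gamma n / Real.Gamma ((n:ℝ) + 2*p - 1)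

lemma a_pos {p : ℝ} (hp : 0 < p) {n : ℕ} (hn : 1 ≤ n) : 0 < a p n := by
  have h1 : (0:ℝ) < Real.Gamma (2*p) := Real.Gamma_pos_of_pos (by linarith)
  have hn0 : (0:ℝ) < n := by exact_mod_cast hn
  have h2 : (0:ℝ) < Real.Gamma n := Real.Gamma_pos_of_pos hn0
  have h3 : (0:ℝ) < Real.Gamma ((n:ℝ) + 2*p - 1) := by
    apply Real.Gamma_pos_of_pos
    have : (1:ℝ) ≤ n := by exact_mod_cast hn
    linarith
  exact div_pos (mul_pos h1 h2) h3

lemma a_succ {p : ℝ} (hp : 0 < p) {n : ℕ} (hn : 1 ≤ n) :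
    a p (n + 1) = a p n * ((n : ℝ) / ((n : ℝ) + (2*p - 1))) := by
  have hn0 : (0:ℝ) < n := by exact_mod_cast hn
  have hq : (0:ℝ) < (n:ℝ) + (2*p - 1) := by
    have : (1:ℝ) ≤ n := by exact_mod_cast hn
    linarith
  have h3 : (0:ℝ) < Real.Gamma ((n:ℝ) + 2*p - 1) := by
    apply Real.Gamma_pos_of_pos; linarith
  unfold a
  have e1 : ((n + 1 : ℕ) : ℝ) = (n:ℝ) + 1 := by push_cast; ring
  rw [e1]
  have e2 : Real.Gamma ((n:ℝ) + 1) = (n:ℝ) * Real.Gamma n := Real.Gamma_add_one hn0.ne'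
  have e3 : (n:ℝ) + 1 + 2*p - 1 = ((n:ℝ) + 2*p - 1) + 1 := by ring
  have e4 : Real.Gamma ((n:ℝ) + 1 + 2*p - 1)
      = ((n:ℝ) + 2*p - 1) * Real.Gamma ((n:ℝ) + 2*p - 1) := by
    rw [e3, Real.Gamma_add_one (by linarith)]
  rw [e2, e4]
  have hq' : (n:ℝ) + 2*p - 1 ≠ 0 := by intro h; rw [show (n:ℝ) + 2*p - 1 = (n:ℝ) + (2*p-1) by ring] at h; linarith
  field_simp
  ring

lemma a_ratio {p : ℝ} (hp : 0 < p) {n : ℕ} (hn : 1 ≤ n) (m : ℕ) :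
    a p (n + m) = a p n *
      ∏ k ∈ Finset.range m, (((n:ℝ) + k) / (((n:ℝ) + k) + (2*p - 1))) := by
  induction m with
  | zero => simp
  | succ m ih =>
    have e : n + (m + 1) = (n + m) + 1 := by omega
    rw [e, a_succ hp (le_trans hn (Nat.le_add_right _ _)), ih, Finset.prod_range_succ]
    push_cast
    ring

lemma prod_telescope {c : ℝ} (hc : 0 < c) (m : ℕ) :
    ∏ k ∈ Finset.range m, ((c + k) / (c + k + 1)) = c / (c + m) := by
  induction m with
  | zero => simp [div_self hc.ne']
  | succ m ih =>
    rw [Finset.prod_range_succ, ih]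
    have h1 : c + (m:ℝ) ≠ 0 := by positivity
    have h2 : c + (m:ℝ) + 1 ≠ 0 := by positivity
    push_cast
    rw [div_mul_div_comm, show c + ((m:ℝ) + 1) = c + m + 1 by ring,
      mul_comm (c + (m:ℝ)) (c + m + 1), mul_comm c (c + (m:ℝ)),
      mul_comm (c + m + 1) (c + (m:ℝ)), mul_div_mul_left _ _ h1]

lemma bern_neg {z q : ℝ} (hz : -1 < z) (hq1 : -1 ≤ q) (hq2 : q ≤ 0) :
    1 + q * z ≤ (1 + z) ^ q := by
  have h1 : (0:ℝ) < 1 + z := by linarith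
  have h2 : (1 + z) ^ (-q) ≤ 1 + (-q) * z :=
    rpow_one_add_le_one_add_mul_self hz.le (by linarith) (by linarith)
  have h3 : (0:ℝ) < (1 + z) ^ (-q) := rpow_pos_of_pos h1 _
  have h4 : (0:ℝ) < 1 - q * z := by nlinarith
  have h5 : (1 + z) ^ q = ((1 + z) ^ (-q))⁻¹ := by
    rw [← Real.rpow_neg h1.le, neg_neg]
  rw [h5]
  have h6 : 1 + q * z ≤ (1 - q * z)⁻¹ := by
    rw [inv_eq_one_div, le_div_iff₀ h4]
    nlinarith [sq_nonneg (q * z)]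
  calc 1 + q * z ≤ (1 - q * z)⁻¹ := h6
    _ ≤ ((1 + z) ^ (-q))⁻¹ := by
        apply inv_anti₀ h3
        linarith

lemma factor_up_nonneg {x q : ℝ} (hx : 2 ≤ x) (hq1 : -1 < q) (hq2 : q ≤ 1) (hq0 : 0 ≤ q) :
    x / (x + q) ≤ (x / (x + 1)) ^ q := by
  have h0 : (0:ℝ) < x := by linarith
  have hq : (0:ℝ) < x + q := by linarith
  have hz : (-1:ℝ) ≤ 1/x := by
    have : (0:ℝ) < 1/x := by positivity
    linarith
  have key : (1 + 1/x) ^ q ≤ 1 + q * (1/x) :=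
    rpow_one_add_le_one_add_mul_self hz hq0 hq2
  have hb : (0:ℝ) < 1 + 1/x := by positivity
  have e1 : x / (x + 1) = (1 + 1/x)⁻¹ := by
    rw [show 1 + 1/x = (x + 1)/x by field_simp, inv_div]
  have e2 : x / (x + q) = (1 + q * (1/x))⁻¹ := by
    rw [show 1 + q * (1/x) = (x + q)/x by field_simp, inv_div]
  rw [e1, e2, Real.inv_rpow hb.le]
  exact inv_anti₀ (rpow_pos_of_pos hb q) key

lemma factor_low_nonneg {x q : ℝ} (hx : 2 ≤ x) (hq1 : -1 < q) (hq2 : q ≤ 1) (hq0 : 0 ≤ q) :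
    ((x + q - 1) / (x + q)) ^ q ≤ x / (x + q) := by
  have hq : (0:ℝ) < x + q := by linarith
  have hs : (-1:ℝ) ≤ -(1/(x+q)) := by
    rw [neg_le_neg_iff, div_le_one hq]
    linarith
  have key : (1 + -(1/(x+q))) ^ q ≤ 1 + q * (-(1/(x+q))) :=
    rpow_one_add_le_one_add_mul_self hs hq0 hq2
  have e1 : 1 + -(1/(x+q)) = (x + q - 1)/(x + q) := by field_simp; ring
  have e2 : 1 + q * (-(1/(x+q))) = x/(x+q) := by field_simp; ring
  rw [e1, e2] at key
  exact key

lemma factor_low_neg {x q : ℝ} (hx : 2 ≤ x) (hq1 : -1 < q) (hq0 : q ≤ 0) :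
    (x / (x + 1)) ^ q ≤ x / (x + q) := by
  have h0 : (0:ℝ) < x := by linarith
  have hq : (0:ℝ) < x + q := by linarith
  have hz : (-1:ℝ) < 1/x := by
    have : (0:ℝ) < 1/x := by positivity
    linarith
  have key : 1 + q * (1/x) ≤ (1 + 1/x) ^ q := bern_neg hz hq1.le hq0
  have hb : (0:ℝ) < 1 + 1/x := by positivity
  have hpos : (0:ℝ) < 1 + q * (1/x) := by
    have h1 : -(1/2 : ℝ) ≤ q * (1/x) := by
      rw [show q * (1/x) = q / x by ring, neg_le, ← neg_div]
      rw [div_le_div_iff₀ h0 (by norm_num : (0:ℝ) < 2)]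
      linarith
    linarith
  have e1 : x / (x + 1) = (1 + 1/x)⁻¹ := by
    rw [show 1 + 1/x = (x + 1)/x by field_simp, inv_div]
  have e2 : x / (x + q) = (1 + q * (1/x))⁻¹ := by
    rw [show 1 + q * (1/x) = (x + q)/x by field_simp, inv_div]
  rw [e1, e2, Real.inv_rpow hb.le]
  exact inv_anti₀ hpos key

lemma factor_up_neg {x q : ℝ} (hx : 2 ≤ x) (hq1 : -1 < q) (hq0 : q ≤ 0) :
    x / (x + q) ≤ ((x + q - 1) / (x + q)) ^ q := by
  have hq : (0:ℝ) < x + q := by linarith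
  have hz : (-1:ℝ) < -(1/(x+q)) := by
    rw [neg_lt_neg_iff, div_lt_one hq]
    linarith
  have key : 1 + q * (-(1/(x+q))) ≤ (1 + -(1/(x+q))) ^ q := bern_neg hz hq1.le hq0
  have e1 : 1 + -(1/(x+q)) = (x + q - 1)/(x + q) := by field_simp; ring
  have e2 : 1 + q * (-(1/(x+q))) = x/(x+q) := by field_simp; ring
  rw [e1, e2] at key
  exact key

lemma prod_bounds {q : ℝ} (hq1 : -1 < q) (hq2 : q ≤ 1) {n : ℕ} (hn : 2 ≤ n) (m : ℕ) :
    min (((n:ℝ)/((n:ℝ)+m)) ^ q) ((((n:ℝ)+q-1)/((n:ℝ)+m+q-1)) ^ q)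
      ≤ ∏ k ∈ Finset.range m, (((n:ℝ)+k) / (((n:ℝ)+k) + q)) ∧
    ∏ k ∈ Finset.range m, (((n:ℝ)+k) / (((n:ℝ)+k) + q))
      ≤ max (((n:ℝ)/((n:ℝ)+m)) ^ q) ((((n:ℝ)+q-1)/((n:ℝ)+m+q-1)) ^ q) := by
  have hnR : (2:ℝ) ≤ (n:ℝ) := by exact_mod_cast hn
  have hxk : ∀ k : ℕ, (2:ℝ) ≤ (n:ℝ) + k := by
    intro k
    have : (0:ℝ) ≤ k := Nat.cast_nonneg k
    linarith
  have hA : (((n:ℝ)/((n:ℝ)+m)) ^ q)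
      = ∏ k ∈ Finset.range m, ((((n:ℝ)+k) / (((n:ℝ)+k) + 1)) ^ q) := by
    rw [Real.finset_prod_rpow _ _ (fun k _ => by
      have := hxk k; positivity) q]
    congr 1
    rw [prod_telescope (by linarith : (0:ℝ) < (n:ℝ)) m]
  have hc : (0:ℝ) < (n:ℝ) + q - 1 := by linarith
  have hB : ((((n:ℝ)+q-1)/((n:ℝ)+m+q-1)) ^ q)
      = ∏ k ∈ Finset.range m, (((((n:ℝ)+k) + q - 1) / (((n:ℝ)+k) + q)) ^ q) := by
    rw [Real.finset_prod_rpow _ _ (fun k _ => by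
      have := hxk k
      exact div_nonneg (by linarith) (by linarith)) q]
    congr 1
    have h2 : ∏ k ∈ Finset.range m, ((((n:ℝ)+k) + q - 1) / (((n:ℝ)+k) + q))
        = ∏ k ∈ Finset.range m, ((((n:ℝ)+q-1) + k) / (((n:ℝ)+q-1) + k + 1)) :=
      Finset.prod_congr rfl (fun k _ => by ring_nf)
    rw [h2, prod_telescope hc m]
    rw [show (n:ℝ)+q-1+(m:ℝ) = (n:ℝ)+m+q-1 by ring]
  rcases le_total 0 q with hq0 | hq0
  · constructor
    · refine le_trans (min_le_right _ _) ?_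
      rw [hB]
      refine Finset.prod_le_prod (fun k _ => ?_)
        (fun k _ => factor_low_nonneg (hxk k) hq1 hq2 hq0)
      have := hxk k
      exact rpow_nonneg (div_nonneg (by linarith) (by linarith)) _
    · refine le_trans ?_ (le_max_left _ _)
      rw [hA]
      refine Finset.prod_le_prod (fun k _ => ?_)
        (fun k _ => factor_up_nonneg (hxk k) hq1 hq2 hq0)
      have := hxk k
      exact div_nonneg (by linarith) (by linarith)
  · constructor
    · refine le_trans (min_le_left _ _) ?_
      rw [hA]
      refine Finset.prod_le_prod (fun k _ => ?_)
        (fun k _ => factor_low_neg (hxk k) hq1 hq0)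
      have := hxk k
      exact rpow_nonneg (div_nonneg (by linarith) (by linarith)) _
    · refine le_trans ?_ (le_max_right _ _)
      rw [hB]
      refine Finset.prod_le_prod (fun k _ => ?_)
        (fun k _ => factor_up_neg (hxk k) hq1 hq0)
      have := hxk k
      exact div_nonneg (by linarith) (by linarith)

lemma between_abs {A B R c : ℝ} (h1 : min A B ≤ R) (h2 : R ≤ max A B) :
    |R - c| ≤ |A - c| + |B - c| := by
  rcases le_total A B with h | h
  · rw [min_eq_left h] at h1; rw [max_eq_right h] at h2
    rw [abs_le]
    constructor
    · linarith [neg_abs_le (A - c), abs_nonneg (B - c)]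
    · linarith [le_abs_self (B - c), abs_nonneg (A - c)]
  · rw [min_eq_right h] at h1; rw [max_eq_left h] at h2
    rw [abs_le]
    constructor
    · linarith [neg_abs_le (B - c), abs_nonneg (A - c)]
    · linarith [le_abs_self (A - c), abs_nonneg (B - c)]

lemma lip {e : ℝ} (he1 : -1 ≤ e) (he2 : e ≤ 1) {x y : ℝ} (hx : 0 ≤ x) (hy : 0 ≤ y) :
    |(1+y)^e - (1+x)^e| ≤ |y - x| := by
  have H := Convex.norm_image_sub_le_of_norm_hasDerivWithin_le
    (f := fun s : ℝ => (1+s)^e) (f' := fun s : ℝ => e * (1+s)^(e-1)) (C := 1)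
    (s := Set.Ici (0:ℝ)) ?_ ?_ (convex_Ici 0) hx hy
  · simpa [Real.norm_eq_abs] using H
  · intro s hs
    have hs' : (0:ℝ) ≤ s := hs
    have h1 : HasDerivAt (fun s : ℝ => (1+s)^e) (1 * (e * (1+s)^(e-1))) s := by
      have hd : HasDerivAt (fun s : ℝ => 1 + s) 1 s := (hasDerivAt_id s).const_add 1
      have := hd.rpow_const (p := e) (Or.inl (by positivity))
      simpa [mul_assoc] using this
    have h1' : HasDerivAt (fun s : ℝ => (1+s)^e) (e * (1+s)^(e-1)) s := by
      simpa using h1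
    exact h1'.hasDerivWithinAt
  · intro s hs
    have hs' : (0:ℝ) ≤ s := hs
    rw [Real.norm_eq_abs, abs_mul]
    have h1 : |e| ≤ 1 := abs_le.mpr ⟨he1, he2⟩
    have h2 : |(1+s)^(e-1)| ≤ 1 := by
      rw [abs_of_nonneg (rpow_nonneg (by linarith) _)]
      exact rpow_le_one_of_one_le_of_nonpos (by linarith) (by linarith)
    exact mul_le_one₀ h1 (abs_nonneg _) h2

set_option maxHeartbeats 1000000 in
lemma ratio_close {p : ℝ} (hp : p ∈ Set.Ioc (0:ℝ) 1) {T : ℝ} (hT : 0 < T)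
    {n : ℕ} (hn : 4 ≤ n) {t : ℝ} (ht : t ∈ Set.Icc (0:ℝ) T) :
    |a p (n + ⌊(n:ℝ)*t⌋₊) / a p n - (1+t)^(1-2*p)| ≤ (4*T+2)/n := by
  obtain ⟨hp0, hp1⟩ := hp
  obtain ⟨ht0, htT⟩ := ht
  have hq1 : -1 < 2*p - 1 := by linarith
  have hq2 : 2*p - 1 ≤ 1 := by linarith
  have hn1 : 1 ≤ n := by omega
  have hn2 : 2 ≤ n := by omega
  have hnR : (4:ℝ) ≤ (n:ℝ) := by exact_mod_cast hn
  have hnpos : (0:ℝ) < (n:ℝ) := by linarith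
  set m := ⌊(n:ℝ)*t⌋₊ with hmdef
  have hm1 : (m:ℝ) ≤ (n:ℝ)*t := Nat.floor_le (by positivity)
  have hm2 : (n:ℝ)*t < (m:ℝ) + 1 := Nat.lt_floor_add_one _
  have hm0 : (0:ℝ) ≤ (m:ℝ) := Nat.cast_nonneg m
  have hR : a p (n + m) / a p n
      = ∏ k ∈ Finset.range m, (((n:ℝ)+k)/(((n:ℝ)+k)+(2*p-1))) := by
    rw [a_ratio hp0 hn1 m, mul_div_cancel_left₀ _ (a_pos hp0 hn1).ne']
  obtain ⟨hmin, hmax⟩ := prod_bounds hq1 hq2 hn2 m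
  rw [← hR] at hmin hmax
  have hcpos : (0:ℝ) < (n:ℝ) + (2*p-1) - 1 := by linarith
  -- rewrite A
  have hu0 : (0:ℝ) ≤ (m:ℝ)/(n:ℝ) := by positivity
  have hAe : (((n:ℝ))/((n:ℝ)+m)) ^ (2*p-1) = (1 + (m:ℝ)/(n:ℝ)) ^ (1 - 2*p) := by
    have h1 : 1 + (m:ℝ)/(n:ℝ) = ((n:ℝ)+m)/(n:ℝ) := by field_simp
    have hbpos : (0:ℝ) ≤ 1 + (m:ℝ)/(n:ℝ) := by positivity
    rw [show (1:ℝ) - 2*p = -(2*p-1) by ring, Real.rpow_neg hbpos, h1, ← Real.inv_rpow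
      (by positivity), inv_div]
  have hv0 : (0:ℝ) ≤ (m:ℝ)/((n:ℝ)+(2*p-1)-1) := div_nonneg hm0 hcpos.le
  have hBe : (((n:ℝ)+(2*p-1)-1)/((n:ℝ)+m+(2*p-1)-1)) ^ (2*p-1)
      = (1 + (m:ℝ)/((n:ℝ)+(2*p-1)-1)) ^ (1 - 2*p) := by
    have h1 : 1 + (m:ℝ)/((n:ℝ)+(2*p-1)-1)
        = ((n:ℝ)+m+(2*p-1)-1)/((n:ℝ)+(2*p-1)-1) := by
      field_simp
      ring
    have hbpos : (0:ℝ) ≤ 1 + (m:ℝ)/((n:ℝ)+(2*p-1)-1) := by linarith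
    rw [show (1:ℝ) - 2*p = -(2*p-1) by ring, Real.rpow_neg hbpos, h1, ← Real.inv_rpow
      (div_nonneg (by linarith) hcpos.le), inv_div]
  have he1 : (-1:ℝ) ≤ 1 - 2*p := by linarith
  have he2 : (1:ℝ) - 2*p ≤ 1 := by linarith
  -- floor error bounds
  have hu : |(m:ℝ)/(n:ℝ) - t| ≤ 1/(n:ℝ) := by
    have hut : (m:ℝ)/(n:ℝ) ≤ t := by
      rw [div_le_iff₀ hnpos]
      linarith [mul_comm t (n:ℝ)]
    have h2 : t - (m:ℝ)/(n:ℝ) ≤ 1/(n:ℝ) := by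
      rw [sub_le_iff_le_add, ← sub_le_iff_le_add']
      rw [sub_le_iff_le_add, ← add_div, le_div_iff₀ hnpos]
      linarith [mul_comm t (n:ℝ)]
    rw [abs_le]
    constructor <;> linarith [one_div_pos.mpr hnpos]
  have hmnT : (m:ℝ) ≤ (n:ℝ)*T := le_trans hm1 (by nlinarith)
  have hc2 : (n:ℝ)/2 ≤ (n:ℝ)+(2*p-1)-1 := by linarith
  have hvu : (m:ℝ)/((n:ℝ)+(2*p-1)-1) - (m:ℝ)/(n:ℝ) ≤ 4*T/(n:ℝ) := by
    have e : (m:ℝ)/((n:ℝ)+(2*p-1)-1) - (m:ℝ)/(n:ℝ)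
        = (m:ℝ)*((n:ℝ)-((n:ℝ)+(2*p-1)-1))/((n:ℝ)*((n:ℝ)+(2*p-1)-1)) := by
      field_simp
    rw [e, div_le_div_iff₀ (by positivity) hnpos]
    have k1 : (m:ℝ)*((n:ℝ)-((n:ℝ)+(2*p-1)-1))*(n:ℝ) ≤ (m:ℝ)*2*(n:ℝ) :=
      mul_le_mul_of_nonneg_right
        (mul_le_mul_of_nonneg_left (by linarith : (n:ℝ)-((n:ℝ)+(2*p-1)-1) ≤ 2) hm0) hnpos.le
    have k2 : (m:ℝ)*2*(n:ℝ) ≤ ((n:ℝ)*T)*2*(n:ℝ) :=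
      mul_le_mul_of_nonneg_right
        (mul_le_mul_of_nonneg_right hmnT (by norm_num)) hnpos.le
    have k3 : 4*T*((n:ℝ)*((n:ℝ)/2)) ≤ 4*T*((n:ℝ)*((n:ℝ)+(2*p-1)-1)) := by
      apply mul_le_mul_of_nonneg_left
        (mul_le_mul_of_nonneg_left hc2 hnpos.le) (by linarith)
    nlinarith [k1, k2, k3]
  have hvu0 : (0:ℝ) ≤ (m:ℝ)/((n:ℝ)+(2*p-1)-1) - (m:ℝ)/(n:ℝ) := by
    apply sub_nonneg.mpr
    apply div_le_div_of_nonneg_left hm0 hcpos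
    linarith
  have hv : |(m:ℝ)/((n:ℝ)+(2*p-1)-1) - t| ≤ (4*T+1)/(n:ℝ) := by
    have h := abs_sub_le ((m:ℝ)/((n:ℝ)+(2*p-1)-1)) ((m:ℝ)/(n:ℝ)) t
    have h2 : |(m:ℝ)/((n:ℝ)+(2*p-1)-1) - (m:ℝ)/(n:ℝ)| ≤ 4*T/(n:ℝ) := by
      rw [abs_of_nonneg hvu0]; exact hvu
    have h3 : 4*T/(n:ℝ) + 1/(n:ℝ) = (4*T+1)/(n:ℝ) := by rw [← add_div]
    linarith
  -- conclude
  have hAc : |(((n:ℝ))/((n:ℝ)+m)) ^ (2*p-1) - (1+t)^(1-2*p)| ≤ 1/(n:ℝ) := by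
    rw [hAe]
    exact le_trans (lip he1 he2 ht0 hu0) hu
  have hBc : |(((n:ℝ)+(2*p-1)-1)/((n:ℝ)+m+(2*p-1)-1)) ^ (2*p-1) - (1+t)^(1-2*p)|
      ≤ (4*T+1)/(n:ℝ) := by
    rw [hBe]
    exact le_trans (lip he1 he2 ht0 hv0) hv
  have hbet := between_abs hmin hmax (c := (1+t)^(1-2*p))
  have h4 : 1/(n:ℝ) + (4*T+1)/(n:ℝ) = (4*T+2)/(n:ℝ) := by
    rw [← add_div]; ring_nf
  linarith

theorem stmt_4 (p : ℝ) (hp : p ∈ Set.Ioc (0:ℝ) 1) (T : ℝ) (hT : 0 < T)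
    (S : ℕ → ℝ) (hS : ∀ m : ℕ, 1 ≤ m → |S m| ≤ m) :
    (∃ C > (0:ℝ), ∃ N : ℕ, ∀ n : ℕ, N ≤ n →
      ∀ t ∈ Set.Icc (0:ℝ) T,
        |(a p (n + ⌊(n:ℝ) * t⌋₊) / a p n) * S (n + ⌊(n:ℝ) * t⌋₊) -
            (1 + t) ^ (1 - 2*p) * S (n + ⌊(n:ℝ) * t⌋₊)| / Real.sqrt n
          ≤ C / Real.sqrt n) ∧
    Filter.Tendsto
      (fun n : ℕ => ⨆ t : Set.Icc (0:ℝ) T,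
        |(a p (n + ⌊(n:ℝ) * t.1⌋₊) / a p n) * S (n + ⌊(n:ℝ) * t.1⌋₊) -
            (1 + t.1) ^ (1 - 2*p) * S (n + ⌊(n:ℝ) * t.1⌋₊)| / Real.sqrt n)
      Filter.atTop (nhds 0) := by
  have hC : (0:ℝ) < (4*T+2)*(1+T) := by nlinarith
  have main : ∀ n : ℕ, 4 ≤ n → ∀ t ∈ Set.Icc (0:ℝ) T,
      |(a p (n + ⌊(n:ℝ) * t⌋₊) / a p n) * S (n + ⌊(n:ℝ) * t⌋₊) -
          (1 + t) ^ (1 - 2*p) * S (n + ⌊(n:ℝ) * t⌋₊)| / Real.sqrt n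
        ≤ (4*T+2)*(1+T) / Real.sqrt n := by
    intro n hn t ht
    have hnR : (4:ℝ) ≤ (n:ℝ) := by exact_mod_cast hn
    have hnpos : (0:ℝ) < (n:ℝ) := by linarith
    have h1 := ratio_close hp hT hn ht
    set m := ⌊(n:ℝ)*t⌋₊ with hmdef
    have hnm1 : 1 ≤ n + m := by omega
    have hSb : |S (n+m)| ≤ ((n+m : ℕ) : ℝ) := hS _ hnm1
    have hm1 : (m:ℝ) ≤ (n:ℝ)*t := Nat.floor_le (by
      have := ht.1; positivity)
    have hmT : (m:ℝ) ≤ (n:ℝ)*T := le_trans hm1 (by nlinarith [ht.2])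
    have hnm : ((n+m : ℕ) : ℝ) ≤ (n:ℝ)*(1+T) := by
      push_cast
      nlinarith
    have hnum : |(a p (n + m) / a p n) * S (n + m) -
        (1 + t) ^ (1 - 2*p) * S (n + m)| ≤ (4*T+2)*(1+T) := by
      rw [← sub_mul, abs_mul]
      have step : |a p (n + m) / a p n - (1 + t) ^ (1 - 2*p)| * |S (n+m)|
          ≤ ((4*T+2)/(n:ℝ)) * ((n:ℝ)*(1+T)) := by
        apply mul_le_mul h1 (le_trans hSb hnm) (abs_nonneg _)
        positivity
      have e : ((4*T+2)/(n:ℝ)) * ((n:ℝ)*(1+T)) = (4*T+2)*(1+T) := by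
        field_simp
      rw [e] at step
      exact step
    have hsq : (0:ℝ) < Real.sqrt n := Real.sqrt_pos.mpr hnpos
    exact div_le_div_of_nonneg_right hnum hsq.le |>.trans_eq rfl
  constructor
  · exact ⟨(4*T+2)*(1+T), hC, 4, main⟩
  · have hne : Nonempty (Set.Icc (0:ℝ) T) := ⟨⟨0, le_refl 0, hT.le⟩⟩
    apply squeeze_zero' (g := fun n : ℕ => (4*T+2)*(1+T) / Real.sqrt n)
    · filter_upwards with n
      apply Real.iSup_nonneg
      intro t
      positivity
    · filter_upwards [Filter.eventually_ge_atTop 4] with n hn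
      exact ciSup_le fun t => main n hn t.1 t.2
    · have hsqrt : Filter.Tendsto (fun n : ℕ => Real.sqrt n) Filter.atTop Filter.atTop := by
        have h1 : Filter.Tendsto (fun x : ℝ => x ^ (1/2 : ℝ)) Filter.atTop Filter.atTop :=
          tendsto_rpow_atTop (by norm_num)
        have h2 := h1.comp (tendsto_natCast_atTop_atTop (R := ℝ))
        refine h2.congr fun n => ?_
        simp only [Function.comp_apply]
        rw [← Real.sqrt_eq_rpow]
      exact Filter.Tendsto.div_atTop tendsto_const_nhds hsqrt
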